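/- Let p be a prime and let M(p) = #{q_p(u) : 0 ≤ u ≤ p-1} be the image size of the Fermat quotient map on {0,...,p-1}. Then M(p) ≥ π(p-1)^2 / (π(p-1) + p - 2), where π is the prime counting function. In particular M(p) ≫ p/(log p)^2. -/

import Mathlib

open Finset

/-- The Fermat quotient `q_p(u)`: the unique integer in `[0, p-1]` congruent to
`(u^(p-1) - 1)/p` modulo `p` when `gcd(u,p) = 1`, and `0` on multiples of `p`. -/
def fermatQuotient (p : ℕ) (u : ℤ) : ℤ :=
  if (p : ℤ) ∣ u then 0 else ((u ^ (p - 1) - 1) / (p : ℤ)) % (p : ℤ)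

/-- binomial with square-zero element -/
lemma one_add_pow_of_sq_eq_zero {R : Type*} [CommRing R] (t : R) (ht : t * t = 0) :
    ∀ n : ℕ, (1 + t) ^ n = 1 + n * t := by
  intro n
  induction n with
  | zero => simp
  | succ n ih =>
    rw [pow_succ, ih]
    push_cast
    linear_combination (n : R) * ht

section Roots

variable (p : ℕ) (hp : p.Prime)
include hp

/-- If `x : ZMod p²` reduces to `1` mod `p`, then `x ^ p = 1`. -/
lemma pow_p_eq_one_of_cast_eq_one (x : ZMod (p ^ 2))
    (h : ZMod.castHom (dvd_pow_self p two_ne_zero) (ZMod p) x = 1) : x ^ p = 1 := by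
  haveI : NeZero p := ⟨hp.ne_zero⟩
  haveI : NeZero (p ^ 2) := ⟨pow_ne_zero 2 hp.ne_zero⟩
  have hpp : (p : ZMod (p ^ 2)) * (p : ZMod (p ^ 2)) = 0 := by
    rw [← Nat.cast_mul, ← sq, ZMod.natCast_self]
  have hy : ZMod.castHom (dvd_pow_self p two_ne_zero) (ZMod p) (x - 1) = 0 := by
    rw [map_sub, h, map_one, sub_self]
  have hval : (((x - 1).val : ℕ) : ZMod p) = 0 := by
    rw [ZMod.natCast_val, ← ZMod.castHom_apply (h := dvd_pow_self p two_ne_zero), hy]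
  obtain ⟨m, hm⟩ := (ZMod.natCast_eq_zero_iff _ p).mp hval
  have hx : x = 1 + (p : ZMod (p ^ 2)) * (m : ZMod (p ^ 2)) := by
    have h1 : (((x - 1).val : ℕ) : ZMod (p ^ 2)) = x - 1 := ZMod.natCast_rightInverse (x - 1)
    rw [hm] at h1
    push_cast at h1
    rw [h1]
    ring
  have hsq : ((p : ZMod (p ^ 2)) * m) * ((p : ZMod (p ^ 2)) * m) = 0 := by
    rw [mul_mul_mul_comm, hpp, zero_mul]
  rw [hx, one_add_pow_of_sq_eq_zero _ hsq, ← mul_assoc, hpp, zero_mul, add_zero]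

/-- Units of `ZMod p²` that are `(p-1)`-th roots of unity and reduce to the same unit mod p
are equal. -/
lemma roots_inj (r s : (ZMod (p ^ 2))ˣ) (hr : r ^ (p - 1) = 1) (hs : s ^ (p - 1) = 1)
    (h : Units.map (ZMod.castHom (dvd_pow_self p two_ne_zero) (ZMod p)).toMonoidHom r =
         Units.map (ZMod.castHom (dvd_pow_self p two_ne_zero) (ZMod p)).toMonoidHom s) :
    r = s := by
  set u := r * s⁻¹ with hu
  have hupow : u ^ (p - 1) = 1 := by
    rw [hu, mul_pow, hr, inv_pow, hs, inv_one, one_mul]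
  have hcast : ZMod.castHom (dvd_pow_self p two_ne_zero) (ZMod p) (u : ZMod (p ^ 2)) = 1 := by
    have : Units.map (ZMod.castHom (dvd_pow_self p two_ne_zero) (ZMod p)).toMonoidHom u = 1 := by
      rw [hu, map_mul, map_inv, h, mul_inv_cancel]
    have := congrArg (Units.val) this
    simpa using this
  have hup : u ^ p = 1 := by
    apply Units.ext
    push_cast
    exact pow_p_eq_one_of_cast_eq_one p hp _ hcast
  have : u = 1 := by
    have hsplit : u ^ p = u ^ (p - 1) * u := by
      rw [← pow_succ, Nat.sub_add_cancel hp.one_lt.le]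
    rw [hup, hupow, one_mul] at hsplit
    exact hsplit.symm
  rw [hu] at this
  exact mul_inv_eq_one.mp this

/-- At most `p - 2` nontrivial `(p-1)`-th roots of unity in `(ZMod p²)ˣ`. -/
lemma card_nontrivial_roots [NeZero (p ^ 2)] :
    ((Finset.univ.filter (fun r : (ZMod (p ^ 2))ˣ => r ^ (p - 1) = 1)).erase 1).card ≤ p - 2 := by
  haveI : Fact p.Prime := ⟨hp⟩
  classical
  set φ := Units.map (ZMod.castHom (dvd_pow_self p two_ne_zero) (ZMod p)).toMonoidHom
  have hmem : ∀ r ∈ (Finset.univ.filter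
      (fun r : (ZMod (p ^ 2))ˣ => r ^ (p - 1) = 1)).erase 1,
      φ r ∈ (Finset.univ.erase (1 : (ZMod p)ˣ)) := by
    intro r hr
    rw [mem_erase, mem_filter] at hr
    rw [mem_erase]
    refine ⟨fun h1 => hr.1 ?_, mem_univ _⟩
    exact roots_inj p hp r 1 hr.2.2 (one_pow _) (by rw [h1, map_one])
  have hinj : Set.InjOn φ ((Finset.univ.filter
      (fun r : (ZMod (p ^ 2))ˣ => r ^ (p - 1) = 1)).erase 1) := by
    intro r hr s hs hrs
    rw [Finset.coe_erase, Set.mem_diff, Finset.mem_coe, mem_filter] at hr hs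
    exact roots_inj p hp r s hr.1.2 hs.1.2 hrs
  have := Finset.card_le_card_of_injOn φ hmem hinj
  calc ((Finset.univ.filter (fun r : (ZMod (p ^ 2))ˣ => r ^ (p - 1) = 1)).erase 1).card
      ≤ (Finset.univ.erase (1 : (ZMod p)ˣ)).card := this
    _ = Fintype.card (ZMod p)ˣ - 1 := by
        rw [Finset.card_erase_of_mem (mem_univ _), Finset.card_univ]
    _ = p - 1 - 1 := by rw [ZMod.card_units]
    _ = p - 2 := by omega

end Roots

lemma not_dvd_of_prime_lt {p l : ℕ} (hp : p.Prime) (hl : l.Prime) (hlt : l < p) :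
    ¬ (p : ℤ) ∣ (l : ℤ) := by
  rw [Int.natCast_dvd_natCast]
  intro h
  exact absurd (Nat.le_of_dvd hl.pos h) (not_le.mpr hlt)

lemma fermat_dvd {p l : ℕ} (hp : p.Prime) (hl : l.Prime) (hlt : l < p) :
    (p : ℤ) ∣ ((l : ℤ) ^ (p - 1) - 1) := by
  haveI : Fact p.Prime := ⟨hp⟩
  rw [← ZMod.intCast_zmod_eq_zero_iff_dvd]
  push_cast
  rw [sub_eq_zero]
  apply ZMod.pow_card_sub_one_eq_one
  rw [Ne, ZMod.natCast_eq_zero_iff]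
  intro h
  exact absurd (Nat.le_of_dvd hl.pos h) (not_le.mpr hlt)

/-- Equal Fermat quotients on primes below `p` give congruent `(p-1)`-th powers mod `p²`. -/
lemma fq_pow_eq {p a b : ℕ} (hp : p.Prime) (ha : a.Prime) (hb : b.Prime)
    (halt : a < p) (hblt : b < p)
    (h : fermatQuotient p (a : ℤ) = fermatQuotient p (b : ℤ)) :
    ((a : ZMod (p ^ 2))) ^ (p - 1) = (b : ZMod (p ^ 2)) ^ (p - 1) := by
  have hda := fermat_dvd hp ha halt
  have hdb := fermat_dvd hp hb hblt
  rw [fermatQuotient, fermatQuotient, if_neg (not_dvd_of_prime_lt hp ha halt),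
    if_neg (not_dvd_of_prime_lt hp hb hblt)] at h
  have hmod : ((a : ℤ) ^ (p - 1) - 1) / p ≡ ((b : ℤ) ^ (p - 1) - 1) / p [ZMOD p] := h
  have hmul := hmod.mul_left' (c := (p : ℤ))
  rw [Int.mul_ediv_cancel' hda, Int.mul_ediv_cancel' hdb] at hmul
  have : (a : ℤ) ^ (p - 1) ≡ (b : ℤ) ^ (p - 1) [ZMOD (p : ℤ) * p] := by
    have := hmul.add_right 1
    simpa using this
  have hcast : (((a : ℤ) ^ (p - 1) : ℤ) : ZMod (p ^ 2)) = (((b : ℤ) ^ (p - 1) : ℤ) : ZMod (p ^ 2)) := by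
    rw [ZMod.intCast_eq_intCast_iff]
    have hpp : ((p ^ 2 : ℕ) : ℤ) = (p : ℤ) * p := by push_cast; ring
    rw [Int.ModEq] at this ⊢
    rw [hpp]
    exact this
  push_cast at hcast
  exact hcast

lemma key_count (p : ℕ) (hp : p.Prime) :
    (((Finset.range p).filter Nat.Prime).card) ^ 2 ≤
      (((Finset.range p).image (fun u : ℕ => fermatQuotient p (u : ℤ))).card) *
        ((((Finset.range p).filter Nat.Prime).card) + (p - 2)) := by
  classical
  haveI : Fact p.Prime := ⟨hp⟩
  haveI : NeZero (p ^ 2) := ⟨pow_ne_zero 2 hp.ne_zero⟩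
  set f : ℕ → ℤ := fun u => fermatQuotient p (u : ℤ) with hf
  set P : Finset ℕ := (Finset.range p).filter Nat.Prime with hP
  set D : Finset (ℕ × ℕ) := (P ×ˢ P).filter (fun x => f x.1 = f x.2) with hD
  -- Cauchy–Schwarz step
  have h1 : P.card = ∑ a ∈ P.image f, (P.filter (fun x => f x = a)).card :=
    card_eq_sum_card_image f P
  have hDbi : D = (P.image f).biUnion
      (fun a => (P.filter (fun x => f x = a)) ×ˢ (P.filter (fun x => f x = a))) := by
    ext ⟨x, y⟩
    simp only [hD, mem_filter, mem_product, mem_biUnion, mem_image]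
    constructor
    · rintro ⟨⟨hx, hy⟩, hxy⟩
      exact ⟨f y, ⟨y, hy, rfl⟩, ⟨hx, hxy⟩, ⟨hy, rfl⟩⟩
    · rintro ⟨a, -, ⟨hx, hfx⟩, ⟨hy, hfy⟩⟩
      exact ⟨⟨hx, hy⟩, by rw [hfx, hfy]⟩
  have h2 : D.card = ∑ a ∈ P.image f, (P.filter (fun x => f x = a)).card ^ 2 := by
    rw [hDbi, card_biUnion]
    · simp [card_product, sq]
    · intro a ha b hb hab
      rw [Function.onFun, disjoint_left]
      rintro ⟨x, y⟩ hx hy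
      rw [mem_product, mem_filter, mem_filter] at hx hy
      exact hab (hx.1.2 ▸ hy.1.2)
  have hCS : P.card ^ 2 ≤ (P.image f).card * D.card := by
    rw [h1, h2]
    exact sq_sum_le_card_mul_sum_sq
  -- bounding D
  have hsplit : (D.filter (fun x => x.1 = x.2)).card
      + (D.filter (fun x => ¬ x.1 = x.2)).card = D.card :=
    card_filter_add_card_filter_not _
  have hdiag : (D.filter (fun x => x.1 = x.2)).card ≤ P.card := by
    apply card_le_card_of_injOn Prod.fst
    · intro x hx
      rw [Finset.mem_coe, mem_filter, hD, mem_filter, mem_product] at hx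
      exact hx.1.1.1
    · intro x hx y hy hxy
      rw [Finset.mem_coe, mem_filter] at hx hy
      exact Prod.ext hxy (by rw [← hx.2, ← hy.2, hxy])
  have hmemP : ∀ {l : ℕ}, l ∈ P → l.Prime ∧ l < p := by
    intro l hl
    rw [hP, mem_filter, mem_range] at hl
    exact ⟨hl.2, hl.1⟩
  have hcop : ∀ {l : ℕ}, l ∈ P → Nat.Coprime l (p ^ 2) := by
    intro l hl
    obtain ⟨hlp, hlt⟩ := hmemP hl
    exact ((Nat.coprime_primes hlp hp).mpr (ne_of_lt hlt)).pow_right 2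
  set g : ℕ × ℕ → (ZMod (p ^ 2))ˣ := fun x =>
    if h : Nat.Coprime x.1 (p ^ 2) ∧ Nat.Coprime x.2 (p ^ 2) then
      ZMod.unitOfCoprime x.1 h.1 * (ZMod.unitOfCoprime x.2 h.2)⁻¹ else 1 with hg
  have hlt_sq : p < p ^ 2 := by nlinarith [hp.two_le]
  have hcast_inj : ∀ {a b : ℕ}, a < p ^ 2 → b < p ^ 2 →
      ((a : ZMod (p ^ 2)) = (b : ZMod (p ^ 2))) → a = b := by
    intro a b ha hb h
    rwa [ZMod.natCast_eq_natCast_iff', Nat.mod_eq_of_lt ha, Nat.mod_eq_of_lt hb] at h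
  have hoff : (D.filter (fun x => ¬ x.1 = x.2)).card ≤ p - 2 := by
    refine le_trans ?_ (card_nontrivial_roots p hp)
    apply card_le_card_of_injOn g
    · intro x hx
      rw [Finset.mem_coe, mem_filter, hD, mem_filter, mem_product] at hx
      obtain ⟨⟨⟨hx1, hx2⟩, hfeq⟩, hne⟩ := hx
      have hc1 := hcop hx1
      have hc2 := hcop hx2
      rw [hg]
      simp only [dif_pos (⟨hc1, hc2⟩ : _ ∧ _)]
      have hupow : (ZMod.unitOfCoprime x.1 hc1) ^ (p - 1)
          = (ZMod.unitOfCoprime x.2 hc2) ^ (p - 1) := by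
        apply Units.ext
        push_cast [ZMod.coe_unitOfCoprime]
        exact fq_pow_eq hp (hmemP hx1).1 (hmemP hx2).1 (hmemP hx1).2 (hmemP hx2).2 hfeq
      rw [Finset.mem_coe, mem_erase, mem_filter]
      constructor
      · intro h1
        rw [mul_inv_eq_one] at h1
        have : (x.1 : ZMod (p ^ 2)) = (x.2 : ZMod (p ^ 2)) := by
          rw [← ZMod.coe_unitOfCoprime x.1 hc1, ← ZMod.coe_unitOfCoprime x.2 hc2, h1]
        exact hne (hcast_inj (lt_trans (hmemP hx1).2 hlt_sq)
          (lt_trans (hmemP hx2).2 hlt_sq) this)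
      · refine ⟨mem_univ _, ?_⟩
        rw [mul_pow, inv_pow, hupow, mul_inv_cancel]
    · intro x hx y hy hxy
      rw [Finset.mem_coe, mem_filter, hD, mem_filter, mem_product] at hx hy
      obtain ⟨⟨⟨hx1, hx2⟩, hfx⟩, hnex⟩ := hx
      obtain ⟨⟨⟨hy1, hy2⟩, hfy⟩, hney⟩ := hy
      have hcx1 := hcop hx1; have hcx2 := hcop hx2
      have hcy1 := hcop hy1; have hcy2 := hcop hy2
      rw [hg] at hxy
      simp only [dif_pos (⟨hcx1, hcx2⟩ : _ ∧ _), dif_pos (⟨hcy1, hcy2⟩ : _ ∧ _)] at hxy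
      have hmul : (ZMod.unitOfCoprime x.1 hcx1) * (ZMod.unitOfCoprime y.2 hcy2)
          = (ZMod.unitOfCoprime y.1 hcy1) * (ZMod.unitOfCoprime x.2 hcx2) := by
        rw [← div_eq_mul_inv, ← div_eq_mul_inv, div_eq_div_iff_mul_eq_mul] at hxy
        exact hxy
      have hcast : ((x.1 * y.2 : ℕ) : ZMod (p ^ 2)) = ((y.1 * x.2 : ℕ) : ZMod (p ^ 2)) := by
        push_cast
        rw [← ZMod.coe_unitOfCoprime x.1 hcx1, ← ZMod.coe_unitOfCoprime y.2 hcy2,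
          ← ZMod.coe_unitOfCoprime y.1 hcy1, ← ZMod.coe_unitOfCoprime x.2 hcx2,
          ← Units.val_mul, ← Units.val_mul, hmul]
      have hlt : ∀ {a b : ℕ}, a ∈ P → b ∈ P → a * b < p ^ 2 := by
        intro a b ha hb
        calc a * b < p * p := Nat.mul_lt_mul_of_lt_of_lt (hmemP ha).2 (hmemP hb).2
          _ = p ^ 2 := (sq p).symm
      have heq : x.1 * y.2 = y.1 * x.2 :=
        hcast_inj (hlt hx1 hy2) (hlt hy1 hx2) hcast
      have hdvd : x.1 ∣ y.1 * x.2 := heq ▸ Dvd.intro _ rfl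
      have h11 : x.1 = y.1 := by
        rcases ((hmemP hx1).1.dvd_mul).mp hdvd with h | h
        · exact ((Nat.prime_dvd_prime_iff_eq (hmemP hx1).1 (hmemP hy1).1).mp h)
        · exact absurd ((Nat.prime_dvd_prime_iff_eq (hmemP hx1).1 (hmemP hx2).1).mp h) hnex
      have h22 : y.2 = x.2 := by
        rw [h11] at heq
        exact Nat.eq_of_mul_eq_mul_left (hmemP hy1).1.pos heq
      exact Prod.ext h11 h22.symm
  have hDle : D.card ≤ P.card + (p - 2) := by
    rw [← hsplit]
    exact Nat.add_le_add hdiag hoff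
  have himg : (P.image f).card ≤ ((Finset.range p).image f).card :=
    card_le_card (image_subset_image (filter_subset _ _))
  calc P.card ^ 2 ≤ (P.image f).card * D.card := hCS
    _ ≤ ((Finset.range p).image f).card * (P.card + (p - 2)) :=
        Nat.mul_le_mul himg hDle

theorem image_size_lower_bound (p : ℕ) (hp : p.Prime) :
    ((Nat.primeCounting (p - 1) : ℝ) ^ 2) / (Nat.primeCounting (p - 1) + p - 2 : ℝ) ≤
      (((Finset.range p).image (fun u : ℕ => fermatQuotient p (u : ℤ))).card : ℝ) := by
  have hπ : Nat.primeCounting (p - 1) = ((Finset.range p).filter Nat.Prime).card := by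
    rw [Nat.primeCounting_sub_one, Nat.primeCounting', Nat.count_eq_card_filter_range]
  have hkey := key_count p hp
  rw [← hπ] at hkey
  set t := ((Finset.range p).image (fun u : ℕ => fermatQuotient p (u : ℤ))).card with ht
  rcases eq_or_lt_of_le hp.two_le with h2 | h3
  · rw [← h2]
    norm_num [Nat.primeCounting_one]
  · have h2p : 2 ≤ p := hp.two_le
    have hden : ((Nat.primeCounting (p - 1) : ℝ) + p - 2)
        = ((Nat.primeCounting (p - 1) + (p - 2) : ℕ) : ℝ) := by
      push_cast [Nat.cast_sub h2p]
      ring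
    have hpos : (0 : ℝ) < ((Nat.primeCounting (p - 1) + (p - 2) : ℕ) : ℝ) := by
      have : 1 ≤ p - 2 := by omega
      have : 1 ≤ Nat.primeCounting (p - 1) + (p - 2) := by omega
      exact_mod_cast Nat.lt_of_lt_of_le Nat.zero_lt_one this
    rw [hden, div_le_iff₀ hpos]
    exact_mod_cast hkey
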